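/- For each integer j ≥ 1 and each τ ∈ (0, π/2), the system tan((π/2)(j+1) − √μ) = √μ/(τ tan τ) with (π/2)j < √μ < (π/2)(j+1) has a unique solution μ_j > 0; moreover √μ_j → (π/2)j as τ → 0⁺ and √μ_j → (π/2)(j+1) as τ → π/2⁻. -/

import Mathlib

open Real Set Filter

private lemma tan_key (c K : ℝ) (hc : 0 < c) (hK : 0 < K) :
    ∃! t : ℝ, t ∈ Set.Ioo 0 (Real.pi / 2) ∧ c * Real.tan t + t = K := by
  have hsub : Set.Ico (0:ℝ) (Real.pi/2) ⊆ Set.Ioo (-(Real.pi/2)) (Real.pi/2) := by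
    intro x hx
    exact ⟨lt_of_lt_of_le (neg_neg_of_pos (by positivity)) hx.1, hx.2⟩
  have hmono : StrictMonoOn (fun t => c * Real.tan t + t) (Set.Ico 0 (Real.pi/2)) := by
    intro x hx y hy hxy
    have := Real.strictMonoOn_tan (hsub hx) (hsub hy) hxy
    have := mul_lt_mul_of_pos_left this hc
    dsimp only
    linarith
  have hcont : ContinuousOn (fun t => c * Real.tan t + t) (Set.Ico 0 (Real.pi/2)) := by
    apply ContinuousOn.add _ continuousOn_id
    apply ContinuousOn.mul continuousOn_const
    intro x hx
    exact ((Real.continuousAt_tan.2 (Real.cos_pos_of_mem_Ioo (hsub hx)).ne')).continuousWithinAt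
  -- find b with f b ≥ K
  have htop : Tendsto (fun t => c * Real.tan t + t) (nhdsWithin (Real.pi/2) (Set.Iio (Real.pi/2))) atTop := by
    apply Filter.tendsto_atTop_add_right_of_le' _ (Real.pi/2 - 1)
    · have : Tendsto (fun t => c * Real.tan t) (nhdsWithin (Real.pi/2) (Set.Iio (Real.pi/2))) atTop :=
        (Real.tendsto_tan_pi_div_two).const_mul_atTop hc
      exact this
    · filter_upwards [Ioo_mem_nhdsLT (show Real.pi/2 - 1 < Real.pi/2 by linarith)] with t ht
      exact le_of_lt ht.1
  obtain ⟨b, hb, hbK⟩ : ∃ b ∈ Set.Ioo (0:ℝ) (Real.pi/2), K ≤ c * Real.tan b + b := by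
    have h1 : ∀ᶠ t in nhdsWithin (Real.pi/2) (Set.Iio (Real.pi/2)), K ≤ c * Real.tan t + t :=
      htop.eventually_ge_atTop K
    have h2 : Set.Ioo (0:ℝ) (Real.pi/2) ∈ nhdsWithin (Real.pi/2) (Set.Iio (Real.pi/2)) :=
      Ioo_mem_nhdsLT (by positivity)
    rcases (h1.and (eventually_of_mem h2 fun x hx => hx)).exists with ⟨b, hb1, hb2⟩
    exact ⟨b, hb2, hb1⟩
  have hb0 : (0:ℝ) ≤ b := hb.1.le
  have hcont' : ContinuousOn (fun t => c * Real.tan t + t) (Set.Icc 0 b) :=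
    hcont.mono (fun x hx => ⟨hx.1, lt_of_le_of_lt hx.2 hb.2⟩)
  have hf0 : c * Real.tan 0 + 0 = 0 := by simp
  obtain ⟨t, ht, htK⟩ : ∃ t ∈ Set.Icc (0:ℝ) b, c * Real.tan t + t = K := by
    have := intermediate_value_Icc hb0 hcont'
    have hKmem : K ∈ Set.Icc (c * Real.tan 0 + 0) (c * Real.tan b + b) := by
      rw [hf0]; exact ⟨hK.le, hbK⟩
    rcases this hKmem with ⟨t, ht, ht2⟩
    exact ⟨t, ht, ht2⟩
  have ht0 : 0 < t := by
    rcases ht.1.eq_or_lt with h | h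
    · exfalso; rw [← h] at htK; rw [hf0] at htK; linarith
    · exact h
  have htlt : t < Real.pi/2 := lt_of_le_of_lt ht.2 hb.2
  refine ⟨t, ⟨⟨ht0, htlt⟩, htK⟩, ?_⟩
  rintro t' ⟨ht', htK'⟩
  exact hmono.injOn ⟨ht'.1.le, ht'.2⟩ ⟨ht0.le, htlt⟩ (by rw [htK', htK])

theorem eigenvalues_negative_exponent (j : ℕ) (hj : 1 ≤ j) :
    (∀ τ ∈ Set.Ioo (0 : ℝ) (Real.pi / 2),
      ∃! μ : ℝ, 0 < μ ∧
        Real.pi / 2 * (j : ℝ) < Real.sqrt μ ∧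
        Real.sqrt μ < Real.pi / 2 * ((j : ℝ) + 1) ∧
        Real.tan (Real.pi / 2 * ((j : ℝ) + 1) - Real.sqrt μ) =
          Real.sqrt μ / (τ * Real.tan τ)) ∧
    (∀ μf : ℝ → ℝ,
      (∀ τ ∈ Set.Ioo (0 : ℝ) (Real.pi / 2),
        0 < μf τ ∧
        Real.pi / 2 * (j : ℝ) < Real.sqrt (μf τ) ∧
        Real.sqrt (μf τ) < Real.pi / 2 * ((j : ℝ) + 1) ∧
        Real.tan (Real.pi / 2 * ((j : ℝ) + 1) - Real.sqrt (μf τ)) =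
          Real.sqrt (μf τ) / (τ * Real.tan τ)) →
      Filter.Tendsto (fun τ => Real.sqrt (μf τ)) (nhdsWithin 0 (Set.Ioi 0))
          (nhds (Real.pi / 2 * (j : ℝ))) ∧
      Filter.Tendsto (fun τ => Real.sqrt (μf τ))
          (nhdsWithin (Real.pi / 2) (Set.Iio (Real.pi / 2)))
          (nhds (Real.pi / 2 * ((j : ℝ) + 1)))) := by
  have hj1 : (1:ℝ) ≤ (j:ℝ) := by exact_mod_cast hj
  set K : ℝ := Real.pi / 2 * ((j : ℝ) + 1) with hKdef
  have hK : 0 < K := by positivity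
  have hKge : Real.pi ≤ K := by
    rw [hKdef]; nlinarith [Real.pi_pos]
  constructor
  · intro τ hτ
    have htanpos : 0 < Real.tan τ := Real.tan_pos_of_pos_of_lt_pi_div_two hτ.1 hτ.2
    set c : ℝ := τ * Real.tan τ with hcdef
    have hc : 0 < c := mul_pos hτ.1 htanpos
    obtain ⟨t, ⟨⟨ht0, htlt⟩, htK⟩, huniq⟩ := tan_key c K hc hK
    set s : ℝ := K - t with hsdef
    have hs0 : 0 < s := by
      have : t < K := lt_of_lt_of_le htlt (by linarith [Real.pi_pos])
      linarith
    have hsqrt : Real.sqrt (s^2) = s := Real.sqrt_sq hs0.le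
    have hslb : Real.pi / 2 * (j:ℝ) < s := by
      rw [hsdef, hKdef]; ring_nf; nlinarith
    have htant : Real.tan t = s / c := by
      field_simp [hsdef]
      linarith [htK]
    refine ⟨s^2, ⟨by positivity, ?_, ?_, ?_⟩, ?_⟩
    · rw [hsqrt]; exact hslb
    · rw [hsqrt, hsdef]; linarith
    · rw [hsqrt]
      have h2 : K - s = t := by rw [hsdef]; ring
      rw [h2, htant]
    · rintro μ' ⟨hμ'0, hμ'lb, hμ'ub, hμ'tan⟩
      set s' : ℝ := Real.sqrt μ' with hs'def
      have hs'0 : 0 < s' := Real.sqrt_pos.2 hμ'0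
      set t' : ℝ := K - s' with ht'def
      have hKrw : K = Real.pi/2 * (j:ℝ) + Real.pi/2 := by rw [hKdef]; ring
      have ht'mem : t' ∈ Set.Ioo 0 (Real.pi/2) := by
        constructor
        · simp only [ht'def]; linarith
        · simp only [ht'def]; linarith
      have ht'K : c * Real.tan t' + t' = K := by
        have : Real.tan t' = s' / c := hμ'tan
        rw [this, ht'def]
        field_simp
        ring
      have := huniq t' ⟨ht'mem, ht'K⟩
      have hss : s' = s := by rw [hsdef, ← this, ht'def]; ring
      have : μ' = s'^2 := (Real.sq_sqrt hμ'0.le).symm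
      rw [this, hss]
  · intro μf hμf
    set s : ℝ → ℝ := fun τ => Real.sqrt (μf τ) with hsdef
    set c : ℝ → ℝ := fun τ => τ * Real.tan τ with hcdef
    have hkey : ∀ τ ∈ Set.Ioo (0:ℝ) (Real.pi/2),
        s τ = K - Real.arctan (s τ / c τ) ∧ Real.pi/2 * (j:ℝ) < s τ ∧ s τ < K ∧ 0 < c τ := by
      intro τ hτ
      obtain ⟨h0, hlb, hub, htan⟩ := hμf τ hτ
      have hcpos : 0 < c τ :=
        mul_pos hτ.1 (Real.tan_pos_of_pos_of_lt_pi_div_two hτ.1 hτ.2)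
      have hKrw : K = Real.pi/2 * (j:ℝ) + Real.pi/2 := by rw [hKdef]; ring
      have harc : Real.arctan (s τ / c τ) = K - s τ := by
        rw [← htan]
        apply Real.arctan_tan
        · have : 0 ≤ Real.pi/2 * (j:ℝ) := by positivity
          linarith [Real.pi_pos]
        · linarith
      exact ⟨by rw [harc]; ring, hlb, hub, hcpos⟩
    constructor
    · -- τ → 0⁺
      have hmem : Set.Ioo (0:ℝ) (Real.pi/2) ∈ nhdsWithin (0:ℝ) (Set.Ioi 0) :=
        Ioo_mem_nhdsGT (by positivity)
      -- c → 0 within Ioi 0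
      have hc0 : Tendsto c (nhdsWithin 0 (Set.Ioi 0)) (nhdsWithin 0 (Set.Ioi 0)) := by
        apply tendsto_nhdsWithin_of_tendsto_nhds_of_eventually_within
        · have : ContinuousAt c 0 := by
            apply ContinuousAt.mul continuousAt_id
            exact Real.continuousAt_tan.2 (by simp)
          have h0 : c 0 = 0 := by simp [hcdef]
          simpa [h0] using (this.continuousWithinAt.tendsto)
        · filter_upwards [hmem] with τ hτ
          exact (hkey τ hτ).2.2.2
      have hinv : Tendsto (fun τ => (c τ)⁻¹) (nhdsWithin 0 (Set.Ioi 0)) atTop :=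
        tendsto_inv_nhdsGT_zero.comp hc0
      have hdiv : Tendsto (fun τ => s τ / c τ) (nhdsWithin 0 (Set.Ioi 0)) atTop := by
        apply tendsto_atTop_mono' _ _ (hinv.const_mul_atTop (show (0:ℝ) < Real.pi/2 by positivity))
        filter_upwards [hmem] with τ hτ
        obtain ⟨_, hlb, _, hcpos⟩ := hkey τ hτ
        have hs : Real.pi/2 ≤ s τ := le_trans (by nlinarith [Real.pi_pos]) hlb.le
        rw [div_eq_mul_inv]
        exact mul_le_mul_of_nonneg_right hs (inv_nonneg.2 hcpos.le)
      have harctan : Tendsto (fun τ => Real.arctan (s τ / c τ)) (nhdsWithin 0 (Set.Ioi 0))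
          (nhds (Real.pi/2)) :=
        (Real.tendsto_arctan_atTop.mono_right nhdsWithin_le_nhds).comp hdiv
      have : Tendsto (fun τ => K - Real.arctan (s τ / c τ)) (nhdsWithin 0 (Set.Ioi 0))
          (nhds (K - Real.pi/2)) := tendsto_const_nhds.sub harctan
      have hlim : Tendsto s (nhdsWithin 0 (Set.Ioi 0)) (nhds (K - Real.pi/2)) := by
        apply this.congr'
        filter_upwards [hmem] with τ hτ
        exact ((hkey τ hτ).1).symm
      have : K - Real.pi/2 = Real.pi/2 * (j:ℝ) := by rw [hKdef]; ring
      rwa [this] at hlim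
    · -- τ → π/2⁻
      have hmem : Set.Ioo (0:ℝ) (Real.pi/2) ∈ nhdsWithin (Real.pi/2) (Set.Iio (Real.pi/2)) :=
        Ioo_mem_nhdsLT (by positivity)
      have hctop : Tendsto c (nhdsWithin (Real.pi/2) (Set.Iio (Real.pi/2))) atTop := by
        apply Filter.Tendsto.pos_mul_atTop (show (0:ℝ) < Real.pi/2 by positivity)
        · exact tendsto_id.mono_left nhdsWithin_le_nhds
        · exact Real.tendsto_tan_pi_div_two
      have hinv : Tendsto (fun τ => (c τ)⁻¹) (nhdsWithin (Real.pi/2) (Set.Iio (Real.pi/2))) (nhds 0) :=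
        tendsto_inv_atTop_zero.comp hctop
      have hub : Tendsto (fun τ => K * (c τ)⁻¹) (nhdsWithin (Real.pi/2) (Set.Iio (Real.pi/2))) (nhds 0) := by
        simpa using hinv.const_mul K
      have hdiv : Tendsto (fun τ => s τ / c τ) (nhdsWithin (Real.pi/2) (Set.Iio (Real.pi/2))) (nhds 0) := by
        apply squeeze_zero' _ _ hub
        · filter_upwards [hmem] with τ hτ
          obtain ⟨_, hlb, _, hcpos⟩ := hkey τ hτ
          have : 0 < s τ := lt_trans (by nlinarith [Real.pi_pos]) hlb
          positivity
        · filter_upwards [hmem] with τ hτ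
          obtain ⟨_, _, hub', hcpos⟩ := hkey τ hτ
          rw [div_eq_mul_inv]
          exact mul_le_mul_of_nonneg_right hub'.le (inv_nonneg.2 hcpos.le)
      have harctan : Tendsto (fun τ => Real.arctan (s τ / c τ))
          (nhdsWithin (Real.pi/2) (Set.Iio (Real.pi/2))) (nhds 0) := by
        have := (Real.continuous_arctan.tendsto 0).comp hdiv
        simpa [Function.comp_def] using this
      have hlim : Tendsto s (nhdsWithin (Real.pi/2) (Set.Iio (Real.pi/2))) (nhds (K - 0)) := by
        apply (tendsto_const_nhds.sub harctan).congr'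
        filter_upwards [hmem] with τ hτ
        exact ((hkey τ hτ).1).symm
      simpa using hlim
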